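/- A configuration B = {b_1 < ... < b_n} of distinct nonzero integers is normal if and only if either b_1 = 1, or b_n = -1, or (b_1 < 0, b_n > 0 and gcd(b_1,...,b_n) = 1). -/

import Mathlib

/-- `x ∈ ℝ` lies in the cone (nonnegative real span) of a set `B ⊆ ℤ` of integers. -/
def Cone1 (B : Set ℤ) (x : ℝ) : Prop :=
  ∃ (s : Finset ℤ) (c : ℤ → ℝ), ↑s ⊆ B ∧ (∀ b, 0 ≤ c b) ∧ x = ∑ b ∈ s, c b * (b : ℝ)

/-- `z` is a nonnegative integer combination of elements of `B ⊆ ℤ`. -/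
def NNComb1 (B : Set ℤ) (z : ℤ) : Prop :=
  ∃ (s : Finset ℤ) (c : ℤ → ℕ), ↑s ⊆ B ∧ z = ∑ b ∈ s, (c b : ℤ) * b

/-- `B ⊆ ℤ` is normal if every integer in `cone(B)` is a nonnegative integer
combination of elements of `B`. -/
def Normal1 (B : Set ℤ) : Prop :=
  ∀ z : ℤ, Cone1 B (z : ℝ) → NNComb1 B z

lemma nncomb_add (B : Set ℤ) {z w : ℤ} (hz : NNComb1 B z) (hw : NNComb1 B w) :
    NNComb1 B (z + w) := by
  obtain ⟨s, c, hs, rfl⟩ := hz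
  obtain ⟨t, d, ht, rfl⟩ := hw
  classical
  refine ⟨s ∪ t, fun b => (if b ∈ s then c b else 0) + (if b ∈ t then d b else 0), ?_, ?_⟩
  · intro x hx
    rcases Finset.mem_union.1 (by exact_mod_cast hx) with h | h
    · exact hs h
    · exact ht h
  · have h1 : ∀ (u : Finset ℤ) (f : ℤ → ℕ), u ⊆ s ∪ t →
        ∑ b ∈ s ∪ t, ((if b ∈ u then f b else 0 : ℕ) : ℤ) * b = ∑ b ∈ u, (f b : ℤ) * b := by
      intro u f hu
      rw [← Finset.sum_subset hu (fun x _ hx => by simp [hx])]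
      exact Finset.sum_congr rfl fun x hx => by simp [Finset.mem_of_subset hu, hx]
    have := h1 s c Finset.subset_union_left
    have := h1 t d Finset.subset_union_right
    push_cast
    simp only [add_mul, Finset.sum_add_distrib]
    rw [← h1 s c Finset.subset_union_left, ← h1 t d Finset.subset_union_right]
    push_cast
    rfl

lemma nncomb_closure (B : Set ℤ) (z : ℤ) :
    NNComb1 B z ↔ z ∈ AddSubmonoid.closure B := by
  constructor
  · rintro ⟨s, c, hs, rfl⟩
    exact sum_mem fun b hb => by
      rw [← nsmul_eq_mul]
      exact AddSubmonoid.nsmul_mem _ (AddSubmonoid.subset_closure (hs hb)) _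
  · intro h
    induction h using AddSubmonoid.closure_induction with
    | mem b hb => exact ⟨{b}, fun _ => 1, by simpa using hb, by simp⟩
    | zero => exact ⟨∅, fun _ => 0, by simp, by simp⟩
    | add x y _ _ hx hy => exact nncomb_add B hx hy

lemma bezout_finset (s : Finset ℤ) : ∃ f : ℤ → ℤ, ∑ b ∈ s, f b * b = s.gcd id := by
  classical
  induction s using Finset.induction_on with
  | empty => exact ⟨0, by simp⟩
  | @insert a s ha ih =>
      obtain ⟨f, hf⟩ := ih
      refine ⟨fun x => if x = a then Int.gcdA a (s.gcd id) else Int.gcdB a (s.gcd id) * f x, ?_⟩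
      rw [Finset.sum_insert ha, Finset.gcd_insert]
      have h2 : ∑ x ∈ s, (if x = a then Int.gcdA a (s.gcd id) else Int.gcdB a (s.gcd id) * f x) * x
          = Int.gcdB a (s.gcd id) * ∑ x ∈ s, f x * x := by
        rw [Finset.mul_sum]
        refine Finset.sum_congr rfl fun x hx => ?_
        rw [if_neg (by rintro rfl; exact ha hx), mul_assoc]
      rw [h2, hf]; simp only [ite_true, if_pos]; rw [← Int.coe_gcd, Int.gcd_eq_gcd_ab]
      simp only [id]
      ring

lemma two_mem (B : Set ℤ) {a b : ℤ} (ha : a ∈ B) (hb : b ∈ B) (han : a < 0) (hbp : 0 < b)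
    {z : ℤ} (hdvd : (Int.gcd a b : ℤ) ∣ z) : z ∈ AddSubmonoid.closure B := by
  obtain ⟨k, rfl⟩ := hdvd
  set g : ℤ := (Int.gcd a b : ℤ) with hg
  have hgpos : 0 < g := by
    have h := Int.gcd_pos_of_ne_zero_right a hbp.ne'
    rw [hg]
    exact_mod_cast h
  have hbez : Int.gcdA a b * a + Int.gcdB a b * b = g := by
    rw [hg, Int.gcd_eq_gcd_ab]; ring
  obtain ⟨a', ha2⟩ : g ∣ a := Int.gcd_dvd_left a b
  obtain ⟨b', hb2⟩ : g ∣ b := Int.gcd_dvd_right a b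
  have ha' : a' ≤ -1 := by nlinarith
  have hb' : 1 ≤ b' := by nlinarith
  set x := Int.gcdA a b * k with hx
  set y := Int.gcdB a b * k with hy
  have hxy : x * a + y * b = g * k := by rw [hx, hy, ← hbez]; ring
  set t := max (-x) (max (-y) 0) with htdef
  have ht0 : 0 ≤ t := le_max_of_le_right (le_max_right _ _)
  have htx : -x ≤ t := le_max_left _ _
  have hty : -y ≤ t := le_max_of_le_right (le_max_left _ _)
  have hX : 0 ≤ x + t * b' := by nlinarith
  have hY : 0 ≤ y - t * a' := by nlinarith
  have key : (x + t * b') * a + (y - t * a') * b = g * k := by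
    linear_combination hxy + (t * b') * ha2 - (t * a') * hb2
  have : g * k = ((x + t * b').toNat : ℤ) * a + ((y - t * a').toNat : ℤ) * b := by
    rw [Int.toNat_of_nonneg hX, Int.toNat_of_nonneg hY]; exact key.symm
  rw [this]
  refine add_mem ?_ ?_
  · rw [← nsmul_eq_mul]
    exact AddSubmonoid.nsmul_mem _ (AddSubmonoid.subset_closure ha) _
  · rw [← nsmul_eq_mul]
    exact AddSubmonoid.nsmul_mem _ (AddSubmonoid.subset_closure hb) _

lemma cone_of (B : Set ℤ) {b : ℤ} (hb : b ∈ B) {r : ℝ} (hr : 0 ≤ r) : Cone1 B (r * b) := by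
  classical
  refine ⟨{b}, fun x => if x = b then r else 0, by simpa using hb, fun x => ?_, by simp⟩
  dsimp only
  split <;> simp [hr]

lemma cone_nonneg {B : Set ℤ} (hpos : ∀ b ∈ B, (0:ℤ) < b) {x : ℝ} (h : Cone1 B x) : 0 ≤ x := by
  obtain ⟨s, c, hs, hc, rfl⟩ := h
  exact Finset.sum_nonneg fun b hb =>
    mul_nonneg (hc b) (by exact_mod_cast (hpos b (hs hb)).le)

lemma cone_nonpos {B : Set ℤ} (hneg : ∀ b ∈ B, b < (0:ℤ)) {x : ℝ} (h : Cone1 B x) : x ≤ 0 := by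
  obtain ⟨s, c, hs, hc, rfl⟩ := h
  exact Finset.sum_nonpos fun b hb =>
    mul_nonpos_of_nonneg_of_nonpos (hc b) (by exact_mod_cast (hneg b (hs hb)).le)

theorem stmt1 (B : Finset ℤ) (hne : B.Nonempty) (h0 : (0 : ℤ) ∉ B) :
    Normal1 ↑B ↔
      (B.min' hne = 1 ∨ B.max' hne = -1 ∨
        (B.min' hne < 0 ∧ 0 < B.max' hne ∧ B.gcd id = 1)) := by
  classical
  have hmB : B.min' hne ∈ B := B.min'_mem hne
  have hMB : B.max' hne ∈ B := B.max'_mem hne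
  set m := B.min' hne with hmdef
  set M := B.max' hne with hMdef
  have hm0 : m ≠ 0 := fun h => h0 (h ▸ hmB)
  have hM0 : M ≠ 0 := fun h => h0 (h ▸ hMB)
  constructor
  · intro hN
    rcases lt_trichotomy m 0 with hm | hm | hm
    · rcases lt_trichotomy M 0 with hM | hM | hM
      · -- all negative : show M = -1
        right; left
        by_contra hMne
        have hM2 : M ≤ -2 := by
          have : M ≠ -1 := hMne
          omega
        have hmneg : (m:ℝ) < 0 := by exact_mod_cast hm
        have hcone : Cone1 ↑B ((-1 : ℤ) : ℝ) := by
          have h := cone_of (↑B) (Finset.mem_coe.2 hmB) (r := 1/(-(m:ℝ)))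
            (div_nonneg zero_le_one (by linarith))
          have he : 1/(-(m:ℝ)) * (m:ℝ) = ((-1 : ℤ) : ℝ) := by
            push_cast
            field_simp
          rwa [he] at h
        obtain ⟨s, c, hs, hsum⟩ := hN (-1) hcone
        have hble : ∀ b ∈ s, b ≤ -2 := fun b hb =>
          le_trans (B.le_max' b (Finset.mem_coe.1 (hs hb))) hM2
        have hterm : ∀ b ∈ s, 0 ≤ (c b : ℤ) * (-b) := fun b hb => by
          have := hble b hb
          have h1 : (0:ℤ) ≤ (c b : ℤ) := Int.ofNat_nonneg _
          nlinarith
        have hsum' : ∑ b ∈ s, (c b : ℤ) * (-b) = 1 := by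
          have : ∑ b ∈ s, (c b : ℤ) * (-b) = -∑ b ∈ s, (c b : ℤ) * b := by
            rw [← Finset.sum_neg_distrib]
            exact Finset.sum_congr rfl fun b _ => by ring
          rw [this, ← hsum]; ring
        obtain ⟨b₀, hb₀, hne0⟩ : ∃ b ∈ s, (c b : ℤ) * (-b) ≠ 0 := by
          by_contra hall
          push_neg at hall
          rw [Finset.sum_eq_zero hall] at hsum'
          norm_num at hsum'
        have hle1 : (c b₀ : ℤ) * (-b₀) ≤ 1 := by
          rw [← hsum']
          exact Finset.single_le_sum hterm hb₀
        have hc1 : 1 ≤ (c b₀ : ℤ) := by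
          rcases Nat.eq_zero_or_pos (c b₀) with h | h
          · simp [h] at hne0
          · exact_mod_cast h
        have hb2 := hble b₀ hb₀
        nlinarith
      · exact absurd hM hM0
      · -- mixed : gcd = 1
        right; right
        refine ⟨hm, hM, ?_⟩
        have hMpos : (0:ℝ) < (M:ℝ) := by exact_mod_cast hM
        have hcone : Cone1 ↑B ((1 : ℤ) : ℝ) := by
          have h := cone_of (↑B) (Finset.mem_coe.2 hMB) (r := 1/(M:ℝ)) (by positivity)
          push_cast
          rwa [one_div, inv_mul_cancel₀ hMpos.ne'] at h
        obtain ⟨s, c, hs, hsum⟩ := hN 1 hcone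
        have hdvd : B.gcd id ∣ 1 := by
          rw [hsum]
          exact Finset.dvd_sum fun b hb =>
            Dvd.dvd.mul_left (Finset.gcd_dvd (Finset.mem_coe.1 (hs hb))) _
        rcases Int.isUnit_iff.1 (isUnit_of_dvd_one hdvd) with h | h
        · exact h
        · exfalso
          have hn := Finset.normalize_gcd (f := (id : ℤ → ℤ)) (s := B)
          rw [h, Int.normalize_of_nonpos (by norm_num)] at hn
          exact absurd hn (by norm_num)
    · exact absurd hm hm0
    · -- all positive : m = 1
      left
      by_contra hmne
      have hm2 : 2 ≤ m := by omega
      have hmpos : (0:ℝ) < (m:ℝ) := by exact_mod_cast hm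
      have hcone : Cone1 ↑B ((1 : ℤ) : ℝ) := by
        have h := cone_of (↑B) (Finset.mem_coe.2 hmB) (r := 1/(m:ℝ)) (by positivity)
        push_cast
        rwa [one_div, inv_mul_cancel₀ hmpos.ne'] at h
      obtain ⟨s, c, hs, hsum⟩ := hN 1 hcone
      have hterm : ∀ b ∈ s, 0 ≤ (c b : ℤ) * b := fun b hb => by
        have h2 : 2 ≤ b := le_trans hm2 (B.min'_le b (Finset.mem_coe.1 (hs hb)))
        have h1 : (0:ℤ) ≤ (c b : ℤ) := Int.ofNat_nonneg _
        nlinarith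
      obtain ⟨b₀, hb₀, hne0⟩ : ∃ b ∈ s, (c b : ℤ) * b ≠ 0 := by
        by_contra hall
        push_neg at hall
        rw [Finset.sum_eq_zero hall] at hsum
        norm_num at hsum
      have hle1 : (c b₀ : ℤ) * b₀ ≤ 1 := by
        rw [hsum]
        exact Finset.single_le_sum hterm hb₀
      have hc1 : 1 ≤ (c b₀ : ℤ) := by
        rcases Nat.eq_zero_or_pos (c b₀) with h | h
        · simp [h] at hne0
        · exact_mod_cast h
      have hb2 : 2 ≤ b₀ := le_trans hm2 (B.min'_le b₀ (Finset.mem_coe.1 (hs hb₀)))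
      nlinarith
  · intro hcond z hz
    rcases hcond with h1 | h1 | ⟨hm, hM, hg⟩
    · have hpos : ∀ b ∈ (↑B : Set ℤ), (0:ℤ) < b := fun b hb => by
        have := B.min'_le b (Finset.mem_coe.1 hb)
        omega
      have hz0 : (0:ℝ) ≤ (z:ℝ) := cone_nonneg hpos hz
      have hz0' : 0 ≤ z := by exact_mod_cast hz0
      refine ⟨{1}, fun _ => z.toNat, ?_, ?_⟩
      · simpa using (h1 ▸ hmB : (1:ℤ) ∈ B)
      · simp [Int.toNat_of_nonneg hz0']
    · have hneg : ∀ b ∈ (↑B : Set ℤ), b < (0:ℤ) := fun b hb => by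
        have := B.le_max' b (Finset.mem_coe.1 hb)
        omega
      have hz0 : (z:ℝ) ≤ 0 := cone_nonpos hneg hz
      have hz0' : z ≤ 0 := by exact_mod_cast hz0
      refine ⟨{-1}, fun _ => (-z).toNat, ?_, ?_⟩
      · simpa using (h1 ▸ hMB : (-1:ℤ) ∈ B)
      · simp [Int.toNat_of_nonneg (by omega : (0:ℤ) ≤ -z)]
    · rw [nncomb_closure]
      obtain ⟨f, hf⟩ := bezout_finset B
      rw [hg] at hf
      set g2 : ℤ := (Int.gcd m M : ℤ) with hg2def
      have hg2 : 1 ≤ g2 := by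
        have h := Int.gcd_pos_of_ne_zero_right m hM0
        rw [hg2def]
        exact_mod_cast h
      set t : ℤ → ℤ := fun b => max (-(z * f b)) 0 with htdef
      have htnn : ∀ b, 0 ≤ t b := fun b => le_max_right _ _
      have hnn : ∀ b, 0 ≤ z * f b + g2 * t b := fun b => by
        have h1 : -(z * f b) ≤ t b := le_max_left _ _
        have h2 := htnn b
        nlinarith
      have hkey : z = ∑ b ∈ B, ((z * f b + g2 * t b).toNat : ℤ) * b
          + g2 * (-∑ b ∈ B, t b * b) := by
        have e1 : ∀ b ∈ B, ((z * f b + g2 * t b).toNat : ℤ) * b = (z * f b + g2 * t b) * b :=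
          fun b _ => by rw [Int.toNat_of_nonneg (hnn b)]
        rw [Finset.sum_congr rfl e1]
        have e2 : ∑ b ∈ B, (z * f b + g2 * t b) * b
            = z * (∑ b ∈ B, f b * b) + g2 * (∑ b ∈ B, t b * b) := by
          rw [Finset.mul_sum, Finset.mul_sum, ← Finset.sum_add_distrib]
          exact Finset.sum_congr rfl fun b _ => by ring
        rw [e2, hf]
        ring
      rw [hkey]
      refine add_mem (sum_mem fun b hb => ?_) ?_
      · rw [← nsmul_eq_mul]
        exact AddSubmonoid.nsmul_mem _ (AddSubmonoid.subset_closure (Finset.mem_coe.2 hb)) _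
      · exact two_mem _ (Finset.mem_coe.2 hmB) (Finset.mem_coe.2 hMB) hm hM
          (dvd_mul_right g2 _)
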